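/- For all positive integers k and r, any set of 2r + k unit vectors in ℝ^r contains two distinct vectors u, v with ⟨u,v⟩ ≥ ((8k/27 + 1)^{1/3} − 1)/(2r + k). -/

import Mathlib

open Finset

namespace RhoAux

variable {n r : ℕ}

def gram (w : Fin n → Fin r → ℝ) (i j : Fin n) : ℝ := ∑ a, w i a * w j a

lemma gram_symm (w : Fin n → Fin r → ℝ) (i j : Fin n) : gram w i j = gram w j i :=
  Finset.sum_congr rfl fun a _ => mul_comm _ _

/-- bilinear expansion -/
lemma expand2 (w : Fin n → Fin r → ℝ) (x y : Fin n → ℝ) :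
    ∑ i, ∑ j, x i * y j * gram w i j
      = ∑ a, (∑ i, x i * w i a) * (∑ j, y j * w j a) := by
  have h : ∀ a : Fin r, (∑ i, x i * w i a) * (∑ j, y j * w j a)
      = ∑ i, ∑ j, x i * w i a * (y j * w j a) := fun a => by
    rw [Finset.sum_mul_sum]
  simp only [h, gram, Finset.mul_sum]
  calc ∑ i, ∑ j, ∑ a, x i * y j * (w i a * w j a)
      = ∑ i, ∑ a, ∑ j, x i * y j * (w i a * w j a) :=
        Finset.sum_congr rfl fun i _ => Finset.sum_comm
    _ = ∑ a, ∑ i, ∑ j, x i * y j * (w i a * w j a) := Finset.sum_comm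
    _ = ∑ a, ∑ i, ∑ j, x i * w i a * (y j * w j a) :=
        Finset.sum_congr rfl fun a _ => Finset.sum_congr rfl fun i _ =>
          Finset.sum_congr rfl fun j _ => by ring

/-- square expansion -/
lemma expand_sq (w : Fin n → Fin r → ℝ) (x : Fin n → ℝ) :
    ∑ i, ∑ j, x i * x j * gram w i j = ∑ a, (∑ i, x i * w i a)^2 := by
  rw [expand2]
  exact Finset.sum_congr rfl fun a _ => (sq _).symm

/-- quadratic form is nonneg -/
lemma quad_nonneg (w : Fin n → Fin r → ℝ) (x : Fin n → ℝ) :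
    0 ≤ ∑ i, ∑ j, x i * x j * gram w i j := by
  rw [expand2]
  exact Finset.sum_nonneg fun a _ => by rw [← sq]; positivity

/-- key operator-norm-type bound: quadratic form ≤ 2(1+nα)‖x‖² -/
lemma quad_le (w : Fin n → Fin r → ℝ) (α : ℝ) (hα : 0 ≤ α)
    (hdiag : ∀ i, gram w i i = 1) (hle : ∀ i j, i ≠ j → gram w i j ≤ α)
    (x : Fin n → ℝ) :
    ∑ i, ∑ j, x i * x j * gram w i j ≤ 2 * (1 + n * α) * ∑ i, (x i)^2 := by
  have key : ∀ q : Fin n → ℝ, (∀ i, 0 ≤ q i) →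
      ∑ a, (∑ i, q i * w i a)^2 ≤ ∑ i, (q i)^2 + α * (∑ i, q i)^2 := by
    intro q hq
    rw [← expand_sq]
    have step1 : ∑ i, ∑ j, q i * q j * gram w i j
        ≤ ∑ i, ∑ j, (α * (q i * q j) + if i = j then (1-α) * (q i)^2 else 0) := by
      refine Finset.sum_le_sum fun i _ => Finset.sum_le_sum fun j _ => ?_
      by_cases hij : i = j
      · subst hij
        simp only [if_true, eq_self_iff_true, hdiag]
        nlinarith [sq_nonneg (q i)]
      · simp only [if_neg hij, add_zero]
        have h1 := hle i j hij
        nlinarith [mul_nonneg (hq i) (hq j)]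
    have step2 : ∑ i, ∑ j, (α * (q i * q j) + if i = j then (1-α) * (q i)^2 else 0)
        = α * ((∑ i, q i) * (∑ j, q j)) + (1-α) * ∑ i, (q i)^2 := by
      simp only [Finset.sum_add_distrib]
      congr 1
      · rw [Finset.sum_mul_sum, Finset.mul_sum]
        exact Finset.sum_congr rfl fun i _ => by rw [Finset.mul_sum]
      · rw [Finset.mul_sum]
        exact Finset.sum_congr rfl fun i _ => by rw [Finset.sum_ite_eq univ i]; simp
    have hq2 : 0 ≤ ∑ i, (q i)^2 := Finset.sum_nonneg fun i _ => sq_nonneg _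
    rw [step2] at step1
    nlinarith [mul_nonneg hα hq2]
  rw [expand_sq]
  set p : Fin n → ℝ := fun i => max (x i) 0 with hpdef
  set m : Fin n → ℝ := fun i => max (-x i) 0 with hmdef
  have hp0 : ∀ i, 0 ≤ p i := fun i => le_max_right _ _
  have hm0 : ∀ i, 0 ≤ m i := fun i => le_max_right _ _
  have hx : ∀ i, x i = p i - m i := by
    intro i
    simp only [hpdef, hmdef]
    rcases le_total (x i) 0 with h | h
    · rw [max_eq_right h, max_eq_left (by linarith)]; ring
    · rw [max_eq_left h, max_eq_right (by linarith)]; ring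
  have habs : ∀ i, p i + m i = |x i| := by
    intro i
    simp only [hpdef, hmdef]
    rcases le_total (x i) 0 with h | h
    · rw [max_eq_right h, max_eq_left (by linarith), abs_of_nonpos h]; ring
    · rw [max_eq_left h, max_eq_right (by linarith), abs_of_nonneg h]; ring
  have hsplit : ∀ a, (∑ i, x i * w i a)^2
      ≤ 2*(∑ i, p i * w i a)^2 + 2*(∑ i, m i * w i a)^2 := by
    intro a
    have hd : ∑ i, x i * w i a = (∑ i, p i * w i a) - (∑ i, m i * w i a) := by
      rw [← Finset.sum_sub_distrib]
      exact Finset.sum_congr rfl fun i _ => by rw [hx i]; ring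
    rw [hd]
    nlinarith [sq_nonneg ((∑ i, p i * w i a) + (∑ i, m i * w i a))]
  have kp := key p hp0
  have km := key m hm0
  have hpm2 : ∑ i, (p i)^2 + ∑ i, (m i)^2 ≤ ∑ i, (x i)^2 := by
    rw [← Finset.sum_add_distrib]
    refine Finset.sum_le_sum fun i _ => ?_
    have h1 : (p i + m i)^2 = (x i)^2 := by rw [habs i, sq_abs]
    nlinarith [mul_nonneg (hp0 i) (hm0 i)]
  have hcs : ((∑ i, p i) + (∑ i, m i))^2 ≤ (n:ℝ) * ∑ i, (x i)^2 := by
    have h1 : (∑ i, p i) + (∑ i, m i) = ∑ i, |x i| := by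
      rw [← Finset.sum_add_distrib]
      exact Finset.sum_congr rfl fun i _ => habs i
    have h2 := Finset.sum_mul_sq_le_sq_mul_sq Finset.univ (fun i => |x i|) (fun _ => (1:ℝ))
    simp only [mul_one, one_pow, Finset.sum_const, Finset.card_univ, Fintype.card_fin,
      nsmul_eq_mul, sq_abs] at h2
    rw [h1]
    calc (∑ i, |x i|)^2 ≤ (∑ i, (x i)^2) * n := h2
      _ = (n:ℝ) * ∑ i, (x i)^2 := by ring
  have hsq : (∑ i, p i)^2 + (∑ i, m i)^2 ≤ ((∑ i, p i) + (∑ i, m i))^2 := by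
    have h1 : 0 ≤ ∑ i, p i := Finset.sum_nonneg fun i _ => hp0 i
    have h2 : 0 ≤ ∑ i, m i := Finset.sum_nonneg fun i _ => hm0 i
    nlinarith [mul_nonneg h1 h2]
  calc ∑ a, (∑ i, x i * w i a)^2
      ≤ ∑ a, (2*(∑ i, p i * w i a)^2 + 2*(∑ i, m i * w i a)^2) :=
        Finset.sum_le_sum fun a _ => hsplit a
    _ = 2 * ∑ a, (∑ i, p i * w i a)^2 + 2 * ∑ a, (∑ i, m i * w i a)^2 := by
        rw [Finset.sum_add_distrib, Finset.mul_sum, Finset.mul_sum]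
    _ ≤ 2 * (1 + n * α) * ∑ i, (x i)^2 := by
        have h5 := mul_le_mul_of_nonneg_left hsq hα
        have h6 := mul_le_mul_of_nonneg_left hcs hα
        nlinarith [kp, km, hpm2, h5, h6]

lemma sum4_swap (f : Fin r → Fin r → Fin n → Fin n → ℝ) :
    ∑ a, ∑ b, ∑ i, ∑ j, f a b i j = ∑ i, ∑ j, ∑ a, ∑ b, f a b i j :=
  calc ∑ a, ∑ b, ∑ i, ∑ j, f a b i j
      = ∑ a, ∑ i, ∑ b, ∑ j, f a b i j :=
        Finset.sum_congr rfl fun a _ => Finset.sum_comm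
    _ = ∑ i, ∑ a, ∑ b, ∑ j, f a b i j := Finset.sum_comm
    _ = ∑ i, ∑ a, ∑ j, ∑ b, f a b i j :=
        Finset.sum_congr rfl fun i _ => Finset.sum_congr rfl fun a _ => Finset.sum_comm
    _ = ∑ i, ∑ j, ∑ a, ∑ b, f a b i j :=
        Finset.sum_congr rfl fun i _ => Finset.sum_comm

/-- rank bound : T2 ≥ n²/r -/
lemma T2_bound (w : Fin n → Fin r → ℝ) (hdiag : ∀ i, gram w i i = 1) :
    (n:ℝ)^2 ≤ r * ∑ i, ∑ j, (gram w i j)^2 := by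
  set Wm : Fin r → Fin r → ℝ := fun a b => ∑ i, w i a * w i b with hWm
  have h1 : ∑ a, Wm a a = (n:ℝ) := by
    simp only [hWm]
    rw [Finset.sum_comm]
    have : ∀ i : Fin n, ∑ a, w i a * w i a = 1 := fun i => hdiag i
    simp [this]
  have h2 : (∑ a, Wm a a)^2 ≤ (r:ℝ) * ∑ a, (Wm a a)^2 := by
    have := Finset.sum_mul_sq_le_sq_mul_sq Finset.univ (fun _ => (1:ℝ)) (fun a => Wm a a)
    simp only [one_mul, one_pow, Finset.sum_const, Finset.card_univ, Fintype.card_fin,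
      nsmul_eq_mul, mul_one] at this
    nlinarith [this]
  have h3 : ∑ a, (Wm a a)^2 ≤ ∑ a, ∑ b, (Wm a b)^2 := by
    refine Finset.sum_le_sum fun a _ => ?_
    exact Finset.single_le_sum (f := fun b => (Wm a b)^2) (fun b _ => sq_nonneg _) (Finset.mem_univ a)
  have h4 : ∑ a, ∑ b, (Wm a b)^2 = ∑ i, ∑ j, (gram w i j)^2 := by
    have hA : ∀ (a b : Fin r), (Wm a b)^2 = ∑ i, ∑ j, (w i a * w i b) * (w j a * w j b) := by
      intro a b
      rw [sq, hWm]
      rw [Finset.sum_mul_sum]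
    have hB : ∀ (i j : Fin n), (gram w i j)^2 = ∑ a, ∑ b, (w i a * w i b) * (w j a * w j b) := by
      intro i j
      rw [sq, gram, Finset.sum_mul_sum]
      exact Finset.sum_congr rfl fun a _ => Finset.sum_congr rfl fun b _ => by ring
    simp only [hA, hB]
    exact sum4_swap _
  have hr2 : (0:ℝ) ≤ r := Nat.cast_nonneg r
  calc (n:ℝ)^2 = (∑ a, Wm a a)^2 := by rw [h1]
    _ ≤ (r:ℝ) * ∑ a, (Wm a a)^2 := h2
    _ ≤ (r:ℝ) * (∑ a, ∑ b, (Wm a b)^2) := by nlinarith [h3]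
    _ = r * ∑ i, ∑ j, (gram w i j)^2 := by rw [h4]

/-- PSD bound: T3 ≥ 4 T2 - 4 n -/
lemma T3_bound (w : Fin n → Fin r → ℝ) (hdiag : ∀ i, gram w i i = 1) :
    4 * (∑ i, ∑ j, (gram w i j)^2) - 4 * n
      ≤ ∑ i, ∑ j, ∑ l, gram w i j * gram w j l * gram w l i := by
  have hD : 0 ≤ ∑ j, ∑ a, ((∑ i, gram w i j * w i a) - 2 * w j a)^2 :=
    Finset.sum_nonneg fun j _ => Finset.sum_nonneg fun a _ => sq_nonneg _
  have hexp : ∀ j : Fin n, ∑ a, ((∑ i, gram w i j * w i a) - 2 * w j a)^2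
      = (∑ i, ∑ l, gram w i j * gram w l j * gram w i l)
        - 4 * ∑ i, (gram w i j)^2 + 4 := by
    intro j
    have h1 : ∀ a : Fin r, ((∑ i, gram w i j * w i a) - 2 * w j a)^2
        = (∑ i, gram w i j * w i a)^2
          - (∑ i, gram w i j * w i a) * (4 * w j a) + 4 * (w j a * w j a) := by
      intro a; ring
    simp only [h1]
    rw [Finset.sum_add_distrib, Finset.sum_sub_distrib]
    have h2 : ∑ a, (∑ i, gram w i j * w i a)^2
        = ∑ i, ∑ l, gram w i j * gram w l j * gram w i l := by
      rw [← expand_sq]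
    have h3 : ∑ a, (∑ i, gram w i j * w i a) * (4 * w j a) = 4 * ∑ i, (gram w i j)^2 := by
      have : ∀ a : Fin r, (∑ i, gram w i j * w i a) * (4 * w j a)
          = ∑ i, 4 * (gram w i j * (w i a * w j a)) := by
        intro a
        rw [Finset.sum_mul]
        exact Finset.sum_congr rfl fun i _ => by ring
      simp only [this]
      rw [Finset.sum_comm, Finset.mul_sum]
      refine Finset.sum_congr rfl fun i _ => ?_
      rw [← Finset.mul_sum, ← Finset.mul_sum, sq, gram]
    have h4 : ∑ a, 4 * (w j a * w j a) = 4 := by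
      rw [← Finset.mul_sum]
      have : ∑ a, w j a * w j a = 1 := hdiag j
      rw [this, mul_one]
    rw [h2, h3, h4]
  have hsum : ∑ j, ((∑ i, ∑ l, gram w i j * gram w l j * gram w i l)
        - 4 * ∑ i, (gram w i j)^2 + 4)
      = (∑ i, ∑ j, ∑ l, gram w i j * gram w j l * gram w l i)
        - 4 * (∑ i, ∑ j, (gram w i j)^2) + 4 * n := by
    rw [Finset.sum_add_distrib, Finset.sum_sub_distrib]
    have e1 : ∑ j, ∑ i, ∑ l, gram w i j * gram w l j * gram w i l
        = ∑ i, ∑ j, ∑ l, gram w i j * gram w j l * gram w l i := by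
      rw [Finset.sum_comm]
      refine Finset.sum_congr rfl fun i _ => Finset.sum_congr rfl fun j _ =>
        Finset.sum_congr rfl fun l _ => ?_
      rw [gram_symm w l j, gram_symm w i l]
    have e2 : ∑ j, 4 * ∑ i, (gram w i j)^2 = 4 * ∑ i, ∑ j, (gram w i j)^2 := by
      rw [← Finset.mul_sum, Finset.sum_comm]
    have e3 : ∑ (_j : Fin n), (4:ℝ) = 4 * n := by
      simp [Finset.card_univ, mul_comm]
    rw [e1, e2, e3]
  have h5 : ∑ j, ∑ a, ((∑ i, gram w i j * w i a) - 2 * w j a)^2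
      = (∑ i, ∑ j, ∑ l, gram w i j * gram w j l * gram w l i)
        - 4 * (∑ i, ∑ j, (gram w i j)^2) + 4 * n := by
    rw [← hsum]
    exact Finset.sum_congr rfl fun j _ => hexp j
  linarith [hD, h5.symm.le, h5.le]

/-- helper: pull a constant out of a double sum -/
lemma mul_sum2 (b : ℝ) (f : Fin n → Fin n → ℝ) :
    ∑ i, ∑ j, b * f i j = b * ∑ i, ∑ j, f i j := by
  rw [Finset.mul_sum]
  exact Finset.sum_congr rfl fun i _ => (Finset.mul_sum _ _ _).symm

set_option maxHeartbeats 1600000 in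
theorem key (w : Fin n → Fin r → ℝ) (hdiag : ∀ i, gram w i i = 1)
    (α : ℝ) (hα : 0 ≤ α) (hle : ∀ i j, i ≠ j → gram w i j ≤ α)
    (hn0 : 0 < n) (h2r : 2 * r ≤ n) :
    (8:ℝ)/27 * ((n:ℝ) - 2*r) + 1 ≤ (1 + n*α)^3 := by
  set e : Fin n → Fin n → ℝ := fun i j => (if i = j then 1 else 0) - gram w i j with hedef
  set c : Fin n → ℝ := fun i => ∑ j, gram w i j with hcdef
  set T2 : ℝ := ∑ i, ∑ j, (gram w i j)^2 with hT2def
  set T3 : ℝ := ∑ i, ∑ j, ∑ l, gram w i j * gram w j l * gram w l i with hT3def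
  set σ : ℝ := ∑ i, c i with hσdef
  set Q : ℝ := ∑ i, (c i)^2 with hQdef
  -- basic facts about e
  have hesymm : ∀ i j, e i j = e j i := by
    intro i j
    simp only [hedef]
    rw [gram_symm]
    congr 1
    by_cases h : i = j
    · simp [h]
    · rw [if_neg h, if_neg (fun h' => h h'.symm)]
  have hrow : ∀ i, ∑ j, e i j = 1 - c i := by
    intro i
    simp only [hedef]
    rw [Finset.sum_sub_distrib]
    congr 1
    rw [Finset.sum_ite_eq univ i]
    simp
  have hcol : ∀ j, ∑ i, e i j = 1 - c j := by
    intro j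
    rw [show (∑ i, e i j) = ∑ i, e j i from Finset.sum_congr rfl fun i _ => hesymm i j]
    exact hrow j
  -- positivity of the entrywise-nonneg triple sum
  have hB : ∀ i j, 0 ≤ α + e i j := by
    intro i j
    by_cases h : i = j
    · subst h; simp [hedef, hdiag, hα]
    · simp only [hedef, if_neg h]
      have := hle i j h
      linarith
  have hpos : 0 ≤ ∑ i, ∑ j, ∑ l, (α + e i j) * (α + e j l) * (α + e l i) :=
    Finset.sum_nonneg fun i _ => Finset.sum_nonneg fun j _ => Finset.sum_nonneg fun l _ =>
      mul_nonneg (mul_nonneg (hB i j) (hB j l)) (hB l i)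
  -- the expansion
  have hpt : ∀ i j l : Fin n, (α + e i j) * (α + e j l) * (α + e l i)
      = α^3 + (α^2 * e i j + α^2 * e j l + α^2 * e l i)
        + (α * (e i j * e j l) + α * (e j l * e l i) + α * (e l i * e i j))
        + e i j * e j l * e l i := by
    intro i j l; ring
  have hA0 : ∑ (_i : Fin n), ∑ (_j : Fin n), ∑ (_l : Fin n), (α^3 : ℝ) = (n:ℝ)^3 * α^3 := by
    simp [Finset.sum_const, Finset.card_univ, nsmul_eq_mul]
    ring
  have hA1 : ∑ i, ∑ j, ∑ (_l : Fin n), α^2 * e i j = α^2 * ((n:ℝ) * ∑ i, ∑ j, e i j) := by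
    have h1 : ∀ i j : Fin n, ∑ (_l : Fin n), α^2 * e i j = (n:ℝ) * (α^2 * e i j) := by
      intro i j; simp [Finset.sum_const, Finset.card_univ, nsmul_eq_mul]
    simp only [h1]
    rw [mul_sum2, mul_sum2]
    ring
  have hA2 : ∑ (_i : Fin n), ∑ j, ∑ l, α^2 * e j l = α^2 * ((n:ℝ) * ∑ i, ∑ j, e i j) := by
    rw [Finset.sum_const, Finset.card_univ, Fintype.card_fin, nsmul_eq_mul, mul_sum2]
    ring
  have hA3 : ∑ i, ∑ (_j : Fin n), ∑ l, α^2 * e l i = α^2 * ((n:ℝ) * ∑ i, ∑ j, e i j) := by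
    have h1 : ∀ i : Fin n, ∑ (_j : Fin n), ∑ l, α^2 * e l i = (n:ℝ) * ∑ l, α^2 * e l i := by
      intro i; rw [Finset.sum_const, Finset.card_univ, Fintype.card_fin, nsmul_eq_mul]
    simp only [h1]
    rw [← Finset.mul_sum, mul_sum2, Finset.sum_comm]
    ring
  have hA4 : ∑ i, ∑ j, ∑ l, α * (e i j * e j l) = α * ∑ j, (1 - c j)^2 := by
    have h1 : ∀ i j : Fin n, ∑ l, α * (e i j * e j l) = α * (e i j * (1 - c j)) := by
      intro i j
      rw [← Finset.mul_sum, ← Finset.mul_sum, hrow j]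
    simp only [h1]
    rw [mul_sum2 α]
    congr 1
    rw [Finset.sum_comm]
    refine Finset.sum_congr rfl fun j _ => ?_
    rw [← Finset.sum_mul, hcol j, sq]
  have hA5 : ∑ i, ∑ j, ∑ l, α * (e j l * e l i) = α * ∑ j, (1 - c j)^2 := by
    have h1 : ∀ i : Fin n, ∑ j, ∑ l, α * (e j l * e l i) = ∑ l, α * ((1 - c l) * e l i) := by
      intro i
      rw [Finset.sum_comm]
      refine Finset.sum_congr rfl fun l _ => ?_
      rw [← Finset.mul_sum, ← Finset.sum_mul, hcol l]
    simp only [h1]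
    rw [Finset.sum_comm]
    rw [Finset.mul_sum]
    refine Finset.sum_congr rfl fun l _ => ?_
    rw [← Finset.mul_sum, ← Finset.mul_sum, hrow l, sq]
  have hA6 : ∑ i, ∑ j, ∑ l, α * (e l i * e i j) = α * ∑ j, (1 - c j)^2 := by
    have h1 : ∀ i : Fin n, ∑ j, ∑ l, α * (e l i * e i j) = α * (1 - c i)^2 := by
      intro i
      have h2 : ∀ j : Fin n, ∑ l, α * (e l i * e i j) = α * ((1 - c i) * e i j) := by
        intro j
        rw [← Finset.mul_sum, ← Finset.sum_mul, hcol i]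
      simp only [h2]
      rw [← Finset.mul_sum, ← Finset.mul_sum, hrow i, sq]
    simp only [h1]
    rw [← Finset.mul_sum]
  have hA7 : ∑ i, ∑ j, ∑ l, e i j * e j l * e l i = 3*T2 - T3 - 2*(n:ℝ) := by
    have hpt2 : ∀ i j l : Fin n, e i j * e j l * e l i
        = ((if i = j then (1:ℝ) else 0) * (if j = l then (1:ℝ) else 0) * (if l = i then (1:ℝ) else 0))
          - ((if i = j then (1:ℝ) else 0) * (if j = l then (1:ℝ) else 0) * gram w l i)
          - ((if i = j then (1:ℝ) else 0) * gram w j l * (if l = i then (1:ℝ) else 0))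
          - (gram w i j * (if j = l then (1:ℝ) else 0) * (if l = i then (1:ℝ) else 0))
          + ((if i = j then (1:ℝ) else 0) * gram w j l * gram w l i)
          + (gram w i j * (if j = l then (1:ℝ) else 0) * gram w l i)
          + (gram w i j * gram w j l * (if l = i then (1:ℝ) else 0))
          - gram w i j * gram w j l * gram w l i := by
      intro i j l; simp only [hedef]; ring
    simp only [hpt2, Finset.sum_add_distrib, Finset.sum_sub_distrib]
    have E1 : ∑ i : Fin n, ∑ j : Fin n, ∑ l : Fin n, ((if i = j then (1:ℝ) else 0) * (if j = l then (1:ℝ) else 0) * (if l = i then (1:ℝ) else 0)) = (n:ℝ) := by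
      simp [ite_mul, mul_ite, Finset.sum_ite_eq, Finset.sum_ite_eq', Finset.card_univ]
    have E2 : ∑ i, ∑ j, ∑ l, ((if i = j then (1:ℝ) else 0) * (if j = l then (1:ℝ) else 0) * gram w l i) = (n:ℝ) := by
      simp [ite_mul, mul_ite, Finset.sum_ite_eq, Finset.sum_ite_eq', hdiag, Finset.card_univ]
    have E3 : ∑ i, ∑ j, ∑ l, ((if i = j then (1:ℝ) else 0) * gram w j l * (if l = i then (1:ℝ) else 0)) = (n:ℝ) := by
      simp [ite_mul, mul_ite, Finset.sum_ite_eq, Finset.sum_ite_eq', hdiag, Finset.card_univ]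
    have E4 : ∑ i, ∑ j, ∑ l, (gram w i j * (if j = l then (1:ℝ) else 0) * (if l = i then (1:ℝ) else 0)) = (n:ℝ) := by
      simp [ite_mul, mul_ite, Finset.sum_ite_eq, Finset.sum_ite_eq', hdiag, Finset.card_univ]
    have E5 : ∑ i, ∑ j, ∑ l, ((if i = j then (1:ℝ) else 0) * gram w j l * gram w l i) = T2 := by
      have h1 : ∀ i j : Fin n, ∑ l, ((if i = j then (1:ℝ) else 0) * gram w j l * gram w l i)
          = (if i = j then (1:ℝ) else 0) * ∑ l, gram w j l * gram w l i := by
        intro i j; rw [Finset.mul_sum]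
        exact Finset.sum_congr rfl fun l _ => by ring
      simp only [h1]
      have h2 : ∀ i : Fin n, ∑ j, ((if i = j then (1:ℝ) else 0) * ∑ l, gram w j l * gram w l i)
          = ∑ l, gram w i l * gram w l i := by
        intro i
        rw [show (∑ j, ((if i = j then (1:ℝ) else 0) * ∑ l, gram w j l * gram w l i))
            = ∑ j, (if i = j then (∑ l, gram w j l * gram w l i) else 0) from
          Finset.sum_congr rfl fun j _ => by split_ifs <;> ring]
        rw [Finset.sum_ite_eq univ i]
        simp
      simp only [h2]
      rw [hT2def]
      refine Finset.sum_congr rfl fun i _ => Finset.sum_congr rfl fun l _ => ?_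
      rw [gram_symm w l i, sq]
    have E6 : ∑ i, ∑ j, ∑ l, (gram w i j * (if j = l then (1:ℝ) else 0) * gram w l i) = T2 := by
      have h1 : ∀ i j : Fin n, ∑ l, (gram w i j * (if j = l then (1:ℝ) else 0) * gram w l i)
          = gram w i j * gram w j i := by
        intro i j
        rw [show (∑ l, (gram w i j * (if j = l then (1:ℝ) else 0) * gram w l i))
            = ∑ l, (if j = l then gram w i j * gram w l i else 0) from
          Finset.sum_congr rfl fun l _ => by split_ifs <;> ring]
        rw [Finset.sum_ite_eq univ j]
        simp
      simp only [h1]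
      rw [hT2def]
      refine Finset.sum_congr rfl fun i _ => Finset.sum_congr rfl fun j _ => ?_
      rw [gram_symm w j i, sq]
    have E7 : ∑ i, ∑ j, ∑ l, (gram w i j * gram w j l * (if l = i then (1:ℝ) else 0)) = T2 := by
      have h1 : ∀ i j : Fin n, ∑ l, (gram w i j * gram w j l * (if l = i then (1:ℝ) else 0))
          = gram w i j * gram w j i := by
        intro i j
        rw [show (∑ l, (gram w i j * gram w j l * (if l = i then (1:ℝ) else 0)))
            = ∑ l, (if l = i then gram w i j * gram w j l else 0) from
          Finset.sum_congr rfl fun l _ => by split_ifs <;> ring]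
        rw [Finset.sum_ite_eq' univ i]
        simp
      simp only [h1]
      rw [hT2def]
      refine Finset.sum_congr rfl fun i _ => Finset.sum_congr rfl fun j _ => ?_
      rw [gram_symm w j i, sq]
    rw [E1, E2, E3, E4, E5, E6, E7, ← hT3def]
    ring
  have hrowsum : ∑ i, ∑ j, e i j = (n:ℝ) - σ := by
    rw [show (∑ i, ∑ j, e i j) = ∑ i, (1 - c i) from Finset.sum_congr rfl fun i _ => hrow i]
    rw [Finset.sum_sub_distrib]
    simp [Finset.card_univ, hσdef]
  have hsqsum : ∑ j, (1 - c j)^2 = (n:ℝ) - 2*σ + Q := by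
    have h : ∀ j : Fin n, (1 - c j)^2 = 1 - 2 * c j + (c j)^2 := fun j => by ring
    simp only [h]
    rw [Finset.sum_add_distrib, Finset.sum_sub_distrib, ← Finset.mul_sum]
    simp [Finset.card_univ, hσdef, hQdef]
  have hmaster : 0 ≤ (n:ℝ)^3*α^3 + 3*(α^2*((n:ℝ)*((n:ℝ)-σ))) + 3*(α*((n:ℝ)-2*σ+Q))
      + (3*T2 - T3 - 2*(n:ℝ)) := by
    have h1 : ∑ i, ∑ j, ∑ l, (α + e i j) * (α + e j l) * (α + e l i)
        = (n:ℝ)^3*α^3 + 3*(α^2*((n:ℝ)*((n:ℝ)-σ))) + 3*(α*((n:ℝ)-2*σ+Q))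
          + (3*T2 - T3 - 2*(n:ℝ)) := by
      simp only [hpt, Finset.sum_add_distrib]
      rw [hA0, hA1, hA2, hA3, hA4, hA5, hA6, hA7, hrowsum, hsqsum]
      ring
    linarith [hpos, h1.le, h1.ge]
  clear hpt hA0 hA1 hA2 hA3 hA4 hA5 hA6 hA7 hrowsum hsqsum hpos hB hesymm hrow hcol
  -- bounds on σ and Q
  have hσ0 : 0 ≤ σ := by
    have h := quad_nonneg w (fun _ => (1:ℝ))
    simp only [one_mul] at h
    rw [hσdef]
    simpa only [hcdef] using h
  have hσup : σ ≤ (n:ℝ) + (n:ℝ)^2 * α := by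
    have h1 : ∀ i, c i ≤ 1 + ((n:ℝ) - 1) * α := by
      intro i
      have h2 : ∑ j, gram w i j ≤ ∑ j, (if i = j then (1:ℝ) else α) := by
        refine Finset.sum_le_sum fun j _ => ?_
        by_cases h : i = j
        · subst h; rw [hdiag, if_pos rfl]
        · rw [if_neg h]; exact hle i j h
      have h3 : ∑ j, (if i = j then (1:ℝ) else α) = 1 + ((n:ℝ) - 1) * α := by
        rw [show (∑ j, (if i = j then (1:ℝ) else α))
            = ∑ j, (α + if i = j then 1-α else 0) from
          Finset.sum_congr rfl fun j _ => by split_ifs <;> ring]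
        rw [Finset.sum_add_distrib, Finset.sum_ite_eq univ i]
        simp [Finset.card_univ, nsmul_eq_mul]
        ring
      have : c i = ∑ j, gram w i j := by rw [hcdef]
      linarith [h2, h3]
    have h4 := Finset.sum_le_sum (fun i (_ : i ∈ univ) => h1 i)
    rw [Finset.sum_const, Finset.card_univ, Fintype.card_fin, nsmul_eq_mul] at h4
    have hn' : (0:ℝ) ≤ n := Nat.cast_nonneg n
    rw [hσdef]
    nlinarith [h4, mul_nonneg hn' hα]
  have hQ0 : 0 ≤ Q := Finset.sum_nonneg fun i _ => sq_nonneg _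
  have hQup : Q ≤ 2*(1+(n:ℝ)*α)*σ := by
    have hXS : ∑ a, (∑ i, c i * w i a) * (∑ j, w j a) = Q := by
      have h := expand2 w c (fun _ => (1:ℝ))
      simp only [one_mul, mul_one] at h
      rw [← h, hQdef]
      refine Finset.sum_congr rfl fun i _ => ?_
      rw [← Finset.mul_sum, sq]
    have hCS := Finset.sum_mul_sq_le_sq_mul_sq Finset.univ
      (fun a => ∑ i, c i * w i a) (fun a => ∑ j, w j a)
    have hXq : ∑ a, (∑ i, c i * w i a)^2 ≤ 2*(1+(n:ℝ)*α)*Q := by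
      have h := quad_le w α hα hdiag hle c
      rw [expand_sq] at h
      rw [hQdef]
      exact h
    have hSq : ∑ a, (∑ j, w j a)^2 = σ := by
      have h := expand_sq w (fun _ => (1:ℝ))
      simp only [one_mul] at h
      rw [← h, hσdef]
    clear_value σ Q T2 T3
    rcases eq_or_lt_of_le hQ0 with h | h
    · rw [← h]
      exact mul_nonneg (by positivity) hσ0
    · have h1 : Q^2 ≤ (2*(1+(n:ℝ)*α)*σ) * Q := by
        calc Q^2 = (∑ a, (∑ i, c i * w i a) * (∑ j, w j a))^2 := by rw [hXS]
          _ ≤ (∑ a, (∑ i, c i * w i a)^2) * (∑ a, (∑ j, w j a)^2) := hCS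
          _ = (∑ a, (∑ i, c i * w i a)^2) * σ := by rw [hSq]
          _ ≤ (2*(1+(n:ℝ)*α)*Q) * σ := mul_le_mul_of_nonneg_right hXq hσ0
          _ = (2*(1+(n:ℝ)*α)*σ) * Q := by ring
      have h2 : Q * Q ≤ (2*(1+(n:ℝ)*α)*σ) * Q := by
        calc Q * Q = Q^2 := (sq Q).symm
          _ ≤ (2*(1+(n:ℝ)*α)*σ) * Q := h1
      exact le_of_mul_le_mul_right h2 h
  have hT2b := T2_bound w hdiag
  have hT3b := T3_bound w hdiag
  rw [← hT2def] at hT2b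
  rw [← hT2def, ← hT3def] at hT3b
  clear_value σ Q T2 T3
  clear hσdef hQdef hT2def hT3def hedef hcdef e c
  -- numeric chain
  have hN0 : (0:ℝ) < n := by exact_mod_cast hn0
  have hNr : 2*(r:ℝ) ≤ (n:ℝ) := by exact_mod_cast h2r
  have hr0 : (0:ℝ) ≤ r := Nat.cast_nonneg r
  have s1 : 0 ≤ (n:ℝ)^3*α^3 + 3*(α^2*((n:ℝ)*((n:ℝ)-σ))) + 3*(α*((n:ℝ)-2*σ+Q))
      + 2*(n:ℝ) - T2 := by linarith [hmaster, hT3b]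
  have s2 : 3*α*Q ≤ 3*α*(2*(1+(n:ℝ)*α)*σ) :=
    mul_le_mul_of_nonneg_left hQup (by linarith)
  have s3 : 0 ≤ (n:ℝ)^3*α^3 + 3*α^2*(n:ℝ)^2 + 3*α*(n:ℝ) + 3*(n:ℝ)*α^2*σ
      + 2*(n:ℝ) - T2 := by nlinarith [s1, s2]
  have s4 : 3*(n:ℝ)*α^2*σ ≤ 3*(n:ℝ)*α^2*((n:ℝ) + (n:ℝ)^2*α) :=
    mul_le_mul_of_nonneg_left hσup (by positivity)
  have s5 : T2 ≤ 4*(n:ℝ)^3*α^3 + 6*(n:ℝ)^2*α^2 + 3*(n:ℝ)*α + 2*(n:ℝ) := by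
    nlinarith [s3, s4]
  have s7 : (n:ℝ)^2 ≤ (r:ℝ) * (4*(n:ℝ)^3*α^3 + 6*(n:ℝ)^2*α^2 + 3*(n:ℝ)*α + 2*(n:ℝ)) :=
    le_trans hT2b (mul_le_mul_of_nonneg_left s5 hr0)
  have s8 : (2*(r:ℝ)) * (4*(n:ℝ)^3*α^3 + 6*(n:ℝ)^2*α^2 + 3*(n:ℝ)*α)
      ≤ (n:ℝ) * (4*(n:ℝ)^3*α^3 + 6*(n:ℝ)^2*α^2 + 3*(n:ℝ)*α) :=
    mul_le_mul_of_nonneg_right hNr (by positivity)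
  have s9 : (n:ℝ) * (2*((n:ℝ) - 2*(r:ℝ)))
      ≤ (n:ℝ) * (4*(n:ℝ)^3*α^3 + 6*(n:ℝ)^2*α^2 + 3*(n:ℝ)*α) := by nlinarith [s7, s8]
  have s10 : 2*((n:ℝ) - 2*(r:ℝ)) ≤ 4*(n:ℝ)^3*α^3 + 6*(n:ℝ)^2*α^2 + 3*(n:ℝ)*α :=
    le_of_mul_le_mul_left s9 hN0
  have hβ : 0 ≤ (n:ℝ)*α := by positivity
  nlinarith [s10, hβ, pow_nonneg hβ 3, sq_nonneg ((n:ℝ)*α), mul_nonneg hβ hβ,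
    mul_nonneg (mul_nonneg hβ hβ) hβ]

end RhoAux

theorem main_rho_lower_bound (k r : ℕ) (hk : 0 < k) (hr : 0 < r)
    (v : Fin (2 * r + k) → EuclideanSpace ℝ (Fin r))
    (hunit : ∀ i, ‖v i‖ = 1) :
    ∃ i j, i ≠ j ∧
      (inner ℝ (v i) (v j) : ℝ) ≥
        ((8 / 27 * k + 1) ^ ((1 : ℝ) / 3) - 1) / (2 * r + k) := by
  classical
  have hn3 : 0 < 2 * r + k := by omega
  set w : Fin (2 * r + k) → Fin r → ℝ := fun i a => v i a with hw
  have hgram : ∀ i j, RhoAux.gram w i j = (inner ℝ (v i) (v j) : ℝ) := by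
    intro i j
    rw [RhoAux.gram]
    simp [PiLp.inner_apply, RCLike.inner_apply, conj_trivial, hw, mul_comm]
  have hdiag : ∀ i, RhoAux.gram w i i = 1 := by
    intro i
    rw [hgram, real_inner_self_eq_norm_mul_norm, hunit, mul_one]
  -- get a maximizing off-diagonal pair
  have h01 : ((⟨0, by omega⟩ : Fin (2*r+k)), (⟨1, by omega⟩ : Fin (2*r+k))) ∈
      Finset.univ.filter (fun p : Fin (2*r+k) × Fin (2*r+k) => p.1 ≠ p.2) := by
    simp [Fin.ext_iff]
  obtain ⟨p, hps, hpmax⟩ := Finset.exists_max_image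
    (Finset.univ.filter (fun p : Fin (2*r+k) × Fin (2*r+k) => p.1 ≠ p.2))
    (fun p => RhoAux.gram w p.1 p.2) ⟨_, h01⟩
  simp only [Finset.mem_filter, Finset.mem_univ, true_and] at hps
  set M := RhoAux.gram w p.1 p.2 with hM
  set α := max M 0 with hα
  have hα0 : 0 ≤ α := le_max_right _ _
  have hle : ∀ i j : Fin (2*r+k), i ≠ j → RhoAux.gram w i j ≤ α := by
    intro i j hij
    have := hpmax (i, j) (by simp [hij])
    exact le_trans this (le_max_left _ _)
  have hkey := RhoAux.key w hdiag α hα0 hle hn3 (by omega)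
  have hcast : (((2*r+k : ℕ):ℝ) - 2*r) = (k:ℝ) := by push_cast; ring
  rw [hcast] at hkey
  -- extract root bound
  set x : ℝ := (8 / 27 * (k:ℝ) + 1) ^ ((1 : ℝ) / 3) with hxdef
  have hbase : (0:ℝ) ≤ 8 / 27 * (k:ℝ) + 1 := by positivity
  have hx0 : 0 ≤ x := Real.rpow_nonneg hbase _
  have hx3 : x^3 = 8 / 27 * (k:ℝ) + 1 := by
    rw [hxdef, ← Real.rpow_natCast (_ ^ ((1:ℝ)/3)) 3, ← Real.rpow_mul hbase]
    norm_num
  have h1β : (0:ℝ) ≤ 1 + ((2*r+k : ℕ):ℝ)*α := by positivity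
  have hx_le : x ≤ 1 + ((2*r+k : ℕ):ℝ)*α := by
    refine le_of_pow_le_pow_left₀ (n := 3) (by norm_num) h1β ?_
    rw [hx3]
    calc 8 / 27 * (k:ℝ) + 1 = 8/27 * (k:ℝ) + 1 := rfl
      _ ≤ (1 + ((2*r+k : ℕ):ℝ)*α)^3 := hkey
  have hN0 : (0:ℝ) < ((2*r+k : ℕ):ℝ) := by exact_mod_cast hn3
  have hαge : (x - 1) / ((2*r+k : ℕ):ℝ) ≤ α := by
    rw [div_le_iff₀ hN0]
    nlinarith [hx_le]
  have hx1 : 1 < x := by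
    rw [hxdef]
    refine Real.one_lt_rpow_iff_of_pos (by positivity) |>.mpr ?_
    left
    constructor
    · have : (1:ℝ) ≤ (k:ℝ) := by exact_mod_cast hk
      nlinarith
    · norm_num
  have hαpos : 0 < α := lt_of_lt_of_le (div_pos (by linarith) hN0) hαge
  have hMα : M = α := by
    rcases le_or_gt M 0 with h | h
    · exfalso
      rw [hα, max_eq_right h] at hαpos
      exact lt_irrefl _ hαpos
    · rw [hα, max_eq_left h.le]
  refine ⟨p.1, p.2, hps, ?_⟩
  have hfin : ((8 / 27 * (k:ℝ) + 1) ^ ((1 : ℝ) / 3) - 1) / (2 * (r:ℝ) + (k:ℝ)) ≤ M := by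
    rw [hMα]
    have : (2 * (r:ℝ) + (k:ℝ)) = ((2*r+k : ℕ):ℝ) := by push_cast; ring
    rw [this]
    exact hαge
  rw [← hgram]
  exact hfin
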